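/- Let A and B be sequences and let C and C' be two longest common subsequences of A and B whose first characters differ. For any embedding of C as (p_1,q_1),...,(p_l,q_l) and any embedding of C' as (p'_1,q'_1),...,(p'_l,q'_l), the initial character embeddings cross: either p_1 < p'_1 and q'_1 < q_1, or p'_1 < p_1 and q_1 < q'_1. -/

import Mathlib

/-- `C` is a longest common subsequence of `A` and `B`. -/
def IsLCS {α : Type*} (A B C : List α) : Prop :=
  C.Sublist A ∧ C.Sublist B ∧ ∀ D : List α, D.Sublist A → D.Sublist B → D.length ≤ C.length

/-- `(p, q)` is an embedding of the common subsequence `C` in `A` and `B`: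
strictly increasing position sequences matching the characters of `C`. -/
def IsEmbedding {α : Type*} (A B C : List α) (p q : ℕ → ℕ) : Prop :=
  StrictMonoOn p (Set.Iio C.length) ∧ StrictMonoOn q (Set.Iio C.length) ∧
    ∀ i < C.length, A[p i]? = C[i]? ∧ B[q i]? = C[i]?


lemma sublist_of_embed {α : Type*} : ∀ (C A : List α) (p : ℕ → ℕ),
    StrictMonoOn p (Set.Iio C.length) → (∀ i < C.length, A[p i]? = C[i]?) → C.Sublist A := by
  intro C
  induction C with
  | nil => intro A p _ _; exact List.nil_sublist A
  | cons c C ih =>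
    intro A p hm h
    have h0 : A[p 0]? = some c := by simpa using h 0 (by simp)
    have hp0 : p 0 < A.length := by
      by_contra hlt
      rw [List.getElem?_eq_none (by omega)] at h0
      cases h0
    have hA0 : A[p 0] = c := by
      rw [List.getElem?_eq_getElem hp0] at h0; exact Option.some.inj h0
    have hsub : C.Sublist (A.drop (p 0 + 1)) := by
      apply ih _ (fun i => p (i + 1) - (p 0 + 1))
      · intro a ha b hb hab
        simp only [Set.mem_Iio] at ha hb
        have h1 : p 0 < p (a + 1) := hm (by simp) (by simp; omega) (by omega)
        have h2 : p (a + 1) < p (b + 1) := hm (by simp; omega) (by simp; omega) (by omega)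
        dsimp only
        omega
      · intro i hi
        have h1 : p 0 < p (i + 1) := hm (by simp) (by simp; omega) (by omega)
        rw [List.getElem?_drop]
        have : p 0 + 1 + (p (i + 1) - (p 0 + 1)) = p (i + 1) := by omega
        rw [this]
        simpa using h (i + 1) (by simpa using hi)
    have : (c :: C).Sublist (A.drop (p 0)) := by
      rw [List.drop_eq_getElem_cons hp0, hA0]
      exact hsub.cons₂ c
    exact this.trans (List.drop_sublist _ _)

lemma cons_sublist_of_embed {α : Type*} {A C : List α} {p : ℕ → ℕ} {i : ℕ} {x : α}
    (hm : StrictMonoOn p (Set.Iio C.length)) (h : ∀ j < C.length, A[p j]? = C[j]?)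
    (hi : A[i]? = some x) (hlt : ∀ j < C.length, i < p j) : (x :: C).Sublist A := by
  apply sublist_of_embed (x :: C) A (fun k => match k with | 0 => i | k + 1 => p k)
  · intro a ha b hb hab
    simp only [Set.mem_Iio, List.length_cons] at ha hb
    match a, b with
    | 0, 0 => omega
    | 0, b + 1 => exact hlt b (by omega)
    | a + 1, 0 => omega
    | a + 1, b + 1 => exact hm (by simp; omega) (by simp; omega) (by omega)
  · intro j hj
    match j with
    | 0 => simpa using hi
    | j + 1 => simpa using h j (by simpa using hj)

lemma key_no_parallel {α : Type*} {A B C C' : List α} {p q p' q' : ℕ → ℕ}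
    (hC' : IsLCS A B C') (hCne : C ≠ []) (hC'ne : C' ≠ [])
    (he : IsEmbedding A B C p q) (he' : IsEmbedding A B C' p' q')
    (h1 : p 0 < p' 0) (h2 : q 0 < q' 0) : False := by
  obtain ⟨hp, hq, hpq⟩ := he
  obtain ⟨hp', hq', hpq'⟩ := he'
  have hCl : 0 < C.length := List.length_pos_iff.mpr hCne
  obtain ⟨hA0, hB0⟩ := hpq 0 hCl
  set c := C[0]'hCl with hc
  rw [List.getElem?_eq_getElem hCl] at hA0 hB0
  have hmono : ∀ (r : ℕ → ℕ), StrictMonoOn r (Set.Iio C'.length) →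
      ∀ j < C'.length, r 0 ≤ r j := by
    intro r hr j hj
    rcases Nat.eq_zero_or_pos j with h | h
    · subst h; exact le_rfl
    · exact le_of_lt (hr (by simp; omega) (by simpa using hj) h)
  have hsubA : (c :: C').Sublist A :=
    cons_sublist_of_embed hp' (fun j hj => (hpq' j hj).1) hA0
      (fun j hj => lt_of_lt_of_le h1 (hmono p' hp' j hj))
  have hsubB : (c :: C').Sublist B :=
    cons_sublist_of_embed hq' (fun j hj => (hpq' j hj).2) hB0
      (fun j hj => lt_of_lt_of_le h2 (hmono q' hq' j hj))
  have := hC'.2.2 (c :: C') hsubA hsubB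
  simp at this

theorem stmt2 {α : Type*} (A B C C' : List α) (p q p' q' : ℕ → ℕ)
    (hC : IsLCS A B C) (hC' : IsLCS A B C')
    (hCne : C ≠ []) (hC'ne : C' ≠ []) (hne : C.head? ≠ C'.head?)
    (he : IsEmbedding A B C p q) (he' : IsEmbedding A B C' p' q') :
    (p 0 < p' 0 ∧ q' 0 < q 0) ∨ (p' 0 < p 0 ∧ q 0 < q' 0) := by
  have hCl : 0 < C.length := List.length_pos_iff.mpr hCne
  have hC'l : 0 < C'.length := List.length_pos_iff.mpr hC'ne
  obtain ⟨hA0, hB0⟩ := he.2.2 0 hCl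
  obtain ⟨hA0', hB0'⟩ := he'.2.2 0 hC'l
  have hh : C[0]? = C.head? := List.head?_eq_getElem?.symm
  have hh' : C'[0]? = C'.head? := List.head?_eq_getElem?.symm
  have hpne : p 0 ≠ p' 0 := by
    intro h; apply hne; rw [← hh, ← hh', ← hA0, ← hA0', h]
  have hqne : q 0 ≠ q' 0 := by
    intro h; apply hne; rw [← hh, ← hh', ← hB0, ← hB0', h]
  rcases lt_trichotomy (p 0) (p' 0) with h | h | h
  · left; refine ⟨h, ?_⟩
    by_contra hq
    have : q 0 < q' 0 := by omega
    exact key_no_parallel hC' hCne hC'ne he he' h this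
  · exact absurd h hpne
  · right; refine ⟨h, ?_⟩
    by_contra hq
    have : q' 0 < q 0 := by omega
    exact key_no_parallel hC hC'ne hCne he' he h this
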